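/- Let H be a graph with two parallel edges e, f, and let 𝔠 be a partition of E(H) into matchings such that the union of any two of them is a connected edge set. Then {e} and {f} are both singleton classes of 𝔠, every edge of H is incident with both e and f, and every other class of 𝔠 has at most two edges. -/
import Mathlib


/-- A multigraph (possibly with parallel edges, but loopless). -/
structure Multigraph (V E : Type*) where
  ends : E → Sym2 V
  not_isDiag : ∀ e, ¬ (ends e).IsDiag

namespace Multigraph

variable {V E : Type*} (G : Multigraph V E)

/-- A matching: a set of pairwise non-incident edges. -/
def Matching (M : Set E) : Prop :=
  ∀ e ∈ M, ∀ f ∈ M, e ≠ f → ¬ ∃ v : V, v ∈ G.ends e ∧ v ∈ G.ends f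

/-- An edge set `F` is connected if it is nonempty and any two of its edges are
linked by a chain of edges of `F`, consecutive ones sharing an endpoint. -/
def EdgesConnected (F : Set E) : Prop :=
  F.Nonempty ∧ ∀ e ∈ F, ∀ f ∈ F,
    Relation.ReflTransGen
      (fun a b => a ∈ F ∧ b ∈ F ∧ ∃ v : V, v ∈ G.ends a ∧ v ∈ G.ends b) e f

end Multigraph

/-- If a graph has two parallel edges `e, f` and its edge set is partitioned into
matchings whose pairwise unions are connected, then `{e}` and `{f}` are singleton
classes, every edge is incident with both `e` and `f`, and every other class has
at most two edges. -/
theorem parallel_edges_structure {V E : Type*} [Fintype V] [Fintype E]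
    (G : Multigraph V E) (𝔠 : Set (Set E))
    (hne : ∀ M ∈ 𝔠, M.Nonempty) (hcov : ⋃₀ 𝔠 = Set.univ)
    (hdisj : ∀ M ∈ 𝔠, ∀ N ∈ 𝔠, M ≠ N → Disjoint M N)
    (hmatch : ∀ M ∈ 𝔠, G.Matching M)
    (hconn : ∀ M ∈ 𝔠, ∀ N ∈ 𝔠, M ≠ N → G.EdgesConnected (M ∪ N))
    (e f : E) (hef : e ≠ f) (hpar : G.ends e = G.ends f) :
    ({e} : Set E) ∈ 𝔠 ∧ ({f} : Set E) ∈ 𝔠 ∧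
    (∀ g : E, (∃ v : V, v ∈ G.ends g ∧ v ∈ G.ends e) ∧
      (∃ v : V, v ∈ G.ends g ∧ v ∈ G.ends f)) ∧
    (∀ M ∈ 𝔠, M ≠ ({e} : Set E) → M ≠ ({f} : Set E) → M.ncard ≤ 2) := by
  classical
  obtain ⟨⟨v, w⟩, hvw⟩ := Quot.exists_rep (G.ends e)
  have hends : G.ends e = s(v, w) := hvw.symm
  have he' : e ∈ ⋃₀ 𝔠 := by rw [hcov]; trivial
  obtain ⟨M, hM, heM⟩ := he'
  have hf' : f ∈ ⋃₀ 𝔠 := by rw [hcov]; trivial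
  obtain ⟨N, hN, hfN⟩ := hf'
  have hvmem : v ∈ G.ends e := by rw [hends]; exact Sym2.mem_mk_left v w
  have hvf : v ∈ G.ends f := by rw [← hpar]; exact hvmem
  have hMN : M ≠ N := by
    rintro rfl
    exact hmatch M hM e heM f hfN hef ⟨v, hvmem, hvf⟩
  have hinc : ∀ x ∈ M ∪ N, x ≠ e → x ≠ f → ¬ ∃ u, u ∈ G.ends x ∧ u ∈ G.ends e := by
    rintro x (hx | hx) hxe hxf ⟨u, hu1, hu2⟩
    · exact hmatch M hM x hx e heM hxe ⟨u, hu1, hu2⟩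
    · exact hmatch N hN x hx f hfN hxf ⟨u, hu1, hpar ▸ hu2⟩
  -- M ∪ N ⊆ {e, f}
  have hsub : M ∪ N ⊆ {e, f} := by
    intro g hg
    obtain ⟨-, hchain⟩ := hconn M hM N hN hMN
    have h := hchain e (Or.inl heM) g hg
    clear hg
    simp only [Set.mem_insert_iff, Set.mem_singleton_iff]
    induction h with
    | refl => left; rfl
    | tail hab hr ih =>
      obtain ⟨ha, hb, u, hu1, hu2⟩ := hr
      by_contra hc
      push_neg at hc
      apply hinc _ hb hc.1 hc.2
      rcases ih with rfl | rfl
      · exact ⟨u, hu2, hu1⟩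
      · exact ⟨u, hu2, hpar ▸ hu1⟩
  have hfM : f ∉ M := fun h => hmatch M hM e heM f h hef ⟨v, hvmem, hvf⟩
  have heN : e ∉ N := Set.disjoint_left.mp (hdisj M hM N hN hMN) heM
  have hMe : M = {e} := by
    apply Set.eq_singleton_iff_unique_mem.mpr ⟨heM, ?_⟩
    intro x hx
    rcases hsub (Or.inl hx) with h | h
    · exact h
    · exact absurd (h ▸ hx) hfM
  have hNf : N = {f} := by
    apply Set.eq_singleton_iff_unique_mem.mpr ⟨hfN, ?_⟩
    intro x hx
    rcases hsub (Or.inr hx) with h | h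
    · exact absurd (h ▸ hx) heN
    · exact h
  -- every edge is incident with e
  have hincE : ∀ g : E, ∃ u, u ∈ G.ends g ∧ u ∈ G.ends e := by
    intro g
    have hg : g ∈ ⋃₀ 𝔠 := by rw [hcov]; trivial
    obtain ⟨P, hP, hgP⟩ := hg
    by_cases hPe : P = ({e} : Set E)
    · subst hPe
      rcases hgP with rfl
      exact ⟨v, hvmem, hvmem⟩
    · have hMP : ({e} : Set E) ≠ P := fun h => hPe h.symm
      obtain ⟨-, hchain⟩ := hconn {e} (hMe ▸ hM) P hP hMP
      have h := hchain g (Or.inr hgP) e (Or.inl rfl)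
      clear hgP
      induction h using Relation.ReflTransGen.head_induction_on with
      | refl => exact ⟨v, hvmem, hvmem⟩
      | @head a c hr hc ih =>
        obtain ⟨ha, hb, u, hu1, hu2⟩ := hr
        rcases ha with ha | ha
        · rw [Set.mem_singleton_iff] at ha
          subst ha
          exact ⟨v, hvmem, hvmem⟩
        · rcases hb with hb | hb
          · rw [Set.mem_singleton_iff] at hb
            subst hb
            exact ⟨u, hu1, hu2⟩
          · -- both in P, a matching, so they are equal
            by_cases hac : a = c
            · subst hac; exact ih
            · exact absurd ⟨u, hu1, hu2⟩ (hmatch P hP a ha c hb hac)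
  -- every class has at most 2 edges
  have hcard : ∀ Q ∈ 𝔠, Q.ncard ≤ 2 := by
    intro Q hQ
    have h2 : Q.ncard ≤ (Set.univ : Set Bool).ncard := by
      apply Set.ncard_le_ncard_of_injOn
        (fun x => if v ∈ G.ends x then true else false)
      · intro a _; trivial
      · intro a ha b hb hab
        by_contra hne'
        obtain ⟨ua, hua1, hua2⟩ := hincE a
        obtain ⟨ub, hub1, hub2⟩ := hincE b
        rw [hends, Sym2.mem_iff] at hua2 hub2
        apply hmatch Q hQ a ha b hb hne'
        by_cases hva : v ∈ G.ends a
        · have hvb : v ∈ G.ends b := by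
            by_contra hvb
            simp [hva, hvb] at hab
          exact ⟨v, hva, hvb⟩
        · have hwa : w ∈ G.ends a := by
            rcases hua2 with rfl | rfl
            · exact absurd hua1 hva
            · exact hua1
          have hvb : ¬ v ∈ G.ends b := by
            intro hvb
            simp [hva, hvb] at hab
          have hwb : w ∈ G.ends b := by
            rcases hub2 with rfl | rfl
            · exact absurd hub1 hvb
            · exact hub1
          exact ⟨w, hwa, hwb⟩
    simpa using h2
  refine ⟨hMe ▸ hM, hNf ▸ hN, ?_, ?_⟩
  · intro g
    obtain ⟨u, hu1, hu2⟩ := hincE g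
    exact ⟨⟨u, hu1, hu2⟩, ⟨u, hu1, hpar ▸ hu2⟩⟩
  · intro Q hQ _ _
    exact hcard Q hQ
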